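/- The double zeta value ζ(1,3) = Σ_{0<j<k} 1/(j·k^3) equals ζ(4)/4 = π^4/360. -/

import Mathlib

/-- The multiple zeta value `ζ(n₁,…,n_d) = ∑_{0 < k₁ < ⋯ < k_d} 1/(k₁^{n₁} ⋯ k_d^{n_d})`. -/
noncomputable def mzv (ns : List ℕ) : ℝ :=
  ∑' f : {f : Fin ns.length → ℕ // StrictMono f ∧ ∀ i, 0 < f i},
    ∏ i : Fin ns.length, (1 : ℝ) / (f.1 i : ℝ) ^ ns.get i

open scoped BigOperators
open Set

namespace ZetaOneThreeAux

noncomputable def FF (p : ℕ+ × ℕ+) : ℝ := 1 / ((p.1 : ℝ) ^ 2 * (p.2 : ℝ) ^ 2)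
noncomputable def AA (p : ℕ+ × ℕ+) : ℝ := 1 / ((p.1 : ℝ) * ((p.1 : ℝ) + (p.2 : ℝ)) ^ 3)
noncomputable def BB (p : ℕ+ × ℕ+) : ℝ := 1 / ((p.1 : ℝ) ^ 2 * ((p.1 : ℝ) + (p.2 : ℝ)) ^ 2)

def u : Set (ℕ+ × ℕ+) := {p | p.1 = p.2}
def v : Set (ℕ+ × ℕ+) := {p | p.1 < p.2}
def w : Set (ℕ+ × ℕ+) := {p | p.2 < p.1}

lemma pnat_cast_pos (k : ℕ+) : (0 : ℝ) < (k : ℝ) := by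
  exact_mod_cast k.pos

lemma hsum2 : Summable (fun k : ℕ+ => 1 / (k : ℝ) ^ 2) := by
  have h : Summable (fun n : ℕ => 1 / (n : ℝ) ^ 2) :=
    Real.summable_one_div_nat_pow.mpr one_lt_two
  exact h.comp_injective PNat.coe_injective

lemma hFF : Summable FF := by
  have h := hsum2.mul_of_nonneg hsum2 (fun k => by positivity) (fun k => by positivity)
  refine h.congr fun p => ?_
  rw [div_mul_div_comm, one_mul]
  rfl

lemma AA_le (p : ℕ+ × ℕ+) : AA p ≤ FF p := by
  obtain ⟨j, d⟩ := p
  have hj := pnat_cast_pos j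
  have hd := pnat_cast_pos d
  apply one_div_le_one_div_of_le (by positivity)
  have key : (j:ℝ) * ((j:ℝ)+d)^3 - (j:ℝ)^2*(d:ℝ)^2
      = (j:ℝ)^4 + 3*(j:ℝ)^3*d + 2*(j:ℝ)^2*(d:ℝ)^2 + (j:ℝ)*(d:ℝ)^3
        - (j:ℝ)^2*(d:ℝ)^2 + (j:ℝ)^2*(d:ℝ)^2 := by ring
  nlinarith [pow_nonneg hj.le 4, mul_nonneg (pow_nonneg hj.le 3) hd.le,
    mul_nonneg (pow_nonneg hj.le 2) (pow_nonneg hd.le 2),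
    mul_nonneg hj.le (pow_nonneg hd.le 3)]

lemma BB_le (p : ℕ+ × ℕ+) : BB p ≤ FF p := by
  obtain ⟨j, d⟩ := p
  have hj := pnat_cast_pos j
  have hd := pnat_cast_pos d
  apply one_div_le_one_div_of_le (by positivity)
  nlinarith [pow_nonneg hj.le 4, mul_nonneg (pow_nonneg hj.le 3) hd.le]

lemma hAA : Summable AA :=
  hFF.of_nonneg_of_le (fun p => by unfold AA; positivity) AA_le

lemma hBB : Summable BB :=
  hFF.of_nonneg_of_le (fun p => by unfold BB; positivity) BB_le

lemma FF_swap (p : ℕ+ × ℕ+) : FF p.swap = FF p := by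
  simp [FF, mul_comm]

def eDiag : ℕ+ ≃ ↥u where
  toFun k := ⟨(k, k), rfl⟩
  invFun x := x.1.1
  left_inv k := rfl
  right_inv x := by
    rcases x with ⟨⟨a, b⟩, h⟩
    have h' : a = b := h
    subst h'
    rfl

def eLt : ℕ+ × ℕ+ ≃ ↥v where
  toFun p := ⟨(p.1, p.1 + p.2), PNat.lt_add_right _ _⟩
  invFun x := (x.1.1, x.1.2 - x.1.1)
  left_inv p := by
    have h : p.1 + (p.1 + p.2 - p.1) = p.1 + p.2 := PNat.add_sub_of_lt (PNat.lt_add_right _ _)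
    have h2 : p.1 + p.2 - p.1 = p.2 := add_left_cancel h
    simp [h2]
  right_inv x := by
    rcases x with ⟨⟨a, b⟩, h⟩
    have h' : a < b := h
    exact Subtype.ext (Prod.ext rfl (PNat.add_sub_of_lt h'))

def eGt : ↥v ≃ ↥w where
  toFun x := ⟨x.1.swap, x.2⟩
  invFun x := ⟨x.1.swap, x.2⟩
  left_inv x := by simp
  right_inv x := by simp

lemma tsum_diag : (∑' x : ↥u, FF x.1) = ∑' k : ℕ+, 1 / (k : ℝ) ^ 4 := by
  rw [← eDiag.tsum_eq]
  refine tsum_congr fun k => ?_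
  show (1 : ℝ) / ((k:ℝ)^2 * (k:ℝ)^2) = 1 / (k:ℝ)^4
  ring_nf

lemma tsum_lt : (∑' x : ↥v, FF x.1) = ∑' p, BB p := by
  rw [← eLt.tsum_eq]
  refine tsum_congr fun p => ?_
  show (1 : ℝ) / ((p.1:ℝ)^2 * ((p.1 + p.2 : ℕ+):ℝ)^2) = BB p
  have : ((p.1 + p.2 : ℕ+) : ℝ) = (p.1 : ℝ) + (p.2 : ℝ) := by
    push_cast [PNat.add_coe]
    rfl
  rw [this]; rfl

lemma tsum_gt : (∑' x : ↥w, FF x.1) = ∑' p, BB p := by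
  rw [← eGt.tsum_eq, ← tsum_lt]
  refine tsum_congr fun x => ?_
  show FF x.1.swap = FF x.1
  exact FF_swap _

lemma partition : (∑' p, FF p) = (∑' k : ℕ+, 1 / (k : ℝ) ^ 4) + 2 * ∑' p, BB p := by
  classical
  have hdecomp : ∀ p, FF p = u.indicator FF p + v.indicator FF p + w.indicator FF p := by
    intro p
    rcases lt_trichotomy p.1 p.2 with h | h | h
    · have h1 : p ∉ u := fun hc => absurd (show p.1 = p.2 from hc) h.ne
      have h2 : p ∈ v := h
      have h3 : p ∉ w := fun hc => absurd (show p.2 < p.1 from hc) h.asymm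
      rw [Set.indicator_of_mem h2, Set.indicator_of_notMem h1, Set.indicator_of_notMem h3]
      ring
    · have h1 : p ∈ u := h
      have h2 : p ∉ v := fun hc => absurd (show p.1 < p.2 from hc) (by rw [h]; exact lt_irrefl _)
      have h3 : p ∉ w := fun hc => absurd (show p.2 < p.1 from hc) (by rw [h]; exact lt_irrefl _)
      rw [Set.indicator_of_mem h1, Set.indicator_of_notMem h2, Set.indicator_of_notMem h3]
      ring
    · have h1 : p ∉ u := fun hc => absurd (show p.1 = p.2 from hc) h.ne'
      have h2 : p ∉ v := fun hc => absurd (show p.1 < p.2 from hc) h.asymm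
      have h3 : p ∈ w := h
      rw [Set.indicator_of_mem h3, Set.indicator_of_notMem h1, Set.indicator_of_notMem h2]
      ring
  have hu : Summable (u.indicator FF) := hFF.indicator u
  have hv : Summable (v.indicator FF) := hFF.indicator v
  have hw : Summable (w.indicator FF) := hFF.indicator w
  calc (∑' p, FF p) = ∑' p, (u.indicator FF p + v.indicator FF p + w.indicator FF p) :=
        tsum_congr hdecomp
    _ = (∑' p, u.indicator FF p) + (∑' p, v.indicator FF p) + (∑' p, w.indicator FF p) := by
        rw [Summable.tsum_add (hu.add hv) hw, Summable.tsum_add hu hv]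
    _ = (∑' k : ℕ+, 1 / (k : ℝ) ^ 4) + 2 * ∑' p, BB p := by
        rw [← tsum_subtype u FF, ← tsum_subtype v FF, ← tsum_subtype w FF,
          tsum_diag, tsum_lt, tsum_gt]
        ring

lemma keyid (p : ℕ+ × ℕ+) :
    FF p = (BB p + BB p.swap) + (2 * AA p + 2 * AA p.swap) := by
  obtain ⟨j, d⟩ := p
  have hj := pnat_cast_pos j
  have hd := pnat_cast_pos d
  simp only [FF, AA, BB, Prod.swap]
  have hjd : (0:ℝ) < (j:ℝ) + d := by positivity
  have hdj : (0:ℝ) < (d:ℝ) + j := by positivity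
  field_simp
  ring

lemma hAAswap : Summable (fun p : ℕ+ × ℕ+ => AA p.swap) :=
  (Equiv.prodComm ℕ+ ℕ+).summable_iff.mpr hAA

lemma hBBswap : Summable (fun p : ℕ+ × ℕ+ => BB p.swap) :=
  (Equiv.prodComm ℕ+ ℕ+).summable_iff.mpr hBB

lemma tsum_AA_swap : (∑' p : ℕ+ × ℕ+, AA p.swap) = ∑' p, AA p :=
  (Equiv.prodComm ℕ+ ℕ+).tsum_eq AA

lemma tsum_BB_swap : (∑' p : ℕ+ × ℕ+, BB p.swap) = ∑' p, BB p :=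
  (Equiv.prodComm ℕ+ ℕ+).tsum_eq BB

lemma partition2 : (∑' p, FF p) = 2 * (∑' p, BB p) + 4 * ∑' p, AA p := by
  calc (∑' p, FF p)
      = ∑' p, ((BB p + BB p.swap) + (2 * AA p + 2 * AA p.swap)) := tsum_congr keyid
    _ = (∑' p, (BB p + BB p.swap)) + ∑' p, (2 * AA p + 2 * AA p.swap) :=
        Summable.tsum_add (hBB.add hBBswap) ((hAA.mul_left 2).add (hAAswap.mul_left 2))
    _ = ((∑' p, BB p) + ∑' p : ℕ+ × ℕ+, BB p.swap)
        + ((∑' p, 2 * AA p) + ∑' p : ℕ+ × ℕ+, 2 * AA p.swap) := by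
        rw [Summable.tsum_add hBB hBBswap, Summable.tsum_add (hAA.mul_left 2) (hAAswap.mul_left 2)]
    _ = 2 * (∑' p, BB p) + 4 * ∑' p, AA p := by
        rw [tsum_BB_swap, tsum_mul_left, tsum_mul_left, tsum_AA_swap]
        ring

lemma ZA_eq : (∑' p, AA p) = (∑' k : ℕ+, 1 / (k : ℝ) ^ 4) / 4 := by
  have h := partition.symm.trans partition2
  linarith

def eM : ℕ+ × ℕ+ ≃ {f : Fin 2 → ℕ // StrictMono f ∧ ∀ i, 0 < f i} where
  toFun p := ⟨![(p.1 : ℕ), ((p.1 + p.2 : ℕ+) : ℕ)], by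
      constructor
      · intro i j hij
        fin_cases i <;> fin_cases j <;>
          simp_all [Fin.lt_def, PNat.add_coe]
      · intro i
        fin_cases i <;> simp [PNat.pos]⟩
  invFun f := (⟨f.1 0, f.2.2 0⟩, ⟨f.1 1 - f.1 0, by
      have h01 : f.1 0 < f.1 1 := f.2.1 (by norm_num : (0 : Fin 2) < 1)
      omega⟩)
  left_inv p := by
    refine Prod.ext (Subtype.ext ?_) (Subtype.ext ?_)
    · rfl
    · show ((p.1 + p.2 : ℕ+) : ℕ) - (p.1 : ℕ) = (p.2 : ℕ)
      rw [PNat.add_coe]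
      omega
  right_inv f := by
    have h01 : f.1 0 < f.1 1 := f.2.1 (by norm_num : (0 : Fin 2) < 1)
    apply Subtype.ext
    funext i
    fin_cases i
    · rfl
    · show ((⟨f.1 0, _⟩ + ⟨f.1 1 - f.1 0, _⟩ : ℕ+) : ℕ) = f.1 1
      show f.1 0 + (f.1 1 - f.1 0) = f.1 1
      omega

lemma mzv13 : mzv [1, 3] = ∑' p, AA p := by
  have hm : mzv [1, 3] = ∑' f : {f : Fin 2 → ℕ // StrictMono f ∧ ∀ i, 0 < f i},
      ∏ i : Fin 2, (1 : ℝ) / (f.1 i : ℝ) ^ [1, 3].get i := rfl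
  rw [hm]
  rw [← eM.tsum_eq]
  refine (tsum_congr fun p => ?_).symm
  rw [Fin.prod_univ_two]
  have h1 : ((eM p).1 : Fin 2 → ℕ) 0 = (p.1 : ℕ) := rfl
  have h2 : ((eM p).1 : Fin 2 → ℕ) 1 = ((p.1 + p.2 : ℕ+) : ℕ) := rfl
  rw [h1, h2]
  have : (((p.1 + p.2 : ℕ+) : ℕ) : ℝ) = (p.1 : ℝ) + (p.2 : ℝ) := by
    rw [PNat.add_coe]; push_cast; rfl
  rw [this]
  show AA p = 1 / ((p.1 : ℝ)) ^ (1 : ℕ) * (1 / ((p.1:ℝ) + (p.2:ℝ)) ^ (3 : ℕ))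
  simp only [AA, pow_one]
  rw [div_mul_div_comm, one_mul]


lemma S4_eq : (∑' k : ℕ+, (1 : ℝ) / (k : ℝ) ^ 4) = Real.pi ^ 4 / 90 := by
  rw [← hasSum_zeta_four.tsum_eq]
  have hinj : Function.Injective ((↑) : ℕ+ → ℕ) := PNat.coe_injective
  have hsupp : Function.support (fun n : ℕ => (1 : ℝ) / (n : ℝ) ^ 4)
      ⊆ Set.range ((↑) : ℕ+ → ℕ) := by
    intro n hn
    have hne : n ≠ 0 := by
      rintro rfl
      simp [Function.mem_support] at hn
    exact ⟨⟨n, Nat.pos_of_ne_zero hne⟩, rfl⟩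
  exact hinj.tsum_eq hsupp

end ZetaOneThreeAux

/-- The double zeta value `ζ(1,3) = ∑_{0<j<k} 1/(j·k³)` equals `ζ(4)/4 = π⁴/360`. -/
theorem zeta_one_three :
    mzv [1, 3] = (∑' k : ℕ+, (1 : ℝ) / (k : ℝ) ^ 4) / 4 ∧
      mzv [1, 3] = Real.pi ^ 4 / 360 := by
  constructor
  · rw [ZetaOneThreeAux.mzv13]
    exact ZetaOneThreeAux.ZA_eq
  · rw [ZetaOneThreeAux.mzv13, ZetaOneThreeAux.ZA_eq, ZetaOneThreeAux.S4_eq]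
    ring
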